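/- Let A be a d×d real matrix and Q a symmetric positive definite d×d real matrix with AᵀQ + QA = I_d. For x ∈ ℝ^d set ‖x‖_Q = (xᵀQx)^{1/2}, let ‖A‖_Q = sup_{x≠0} ‖Ax‖_Q/‖x‖_Q, let ‖Q‖ denote the spectral norm of Q, and set a = (1/2)‖Q‖^{-1}. Then for every α ∈ [0, (1/2)‖A‖_Q^{-2}‖Q‖^{-1}]: (i) ‖(I_d − αA)x‖_Q² ≤ (1 − aα)‖x‖_Q² for all x ∈ ℝ^d; (ii) ‖I_d − αA‖ ≤ κ_Q^{1/2}(1 − aα/2), where ‖·‖ on the left is the spectral (Euclidean operator) norm and κ_Q = λ_max(Q)/λ_min(Q) is the ratio of the largest to the smallest eigenvalue of Q. -/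

import Mathlib

set_option maxHeartbeats 1000000


open Matrix

/-- The spectral norm (Euclidean operator norm) of a real square matrix. -/
noncomputable def specNorm {d : ℕ} (M : Matrix (Fin d) (Fin d) ℝ) : ℝ :=
  ‖(Matrix.toEuclideanCLM (𝕜 := ℝ) M :
      EuclideanSpace ℝ (Fin d) →L[ℝ] EuclideanSpace ℝ (Fin d))‖

/-- The `Q`-weighted norm `‖x‖_Q = (xᵀQx)^{1/2}`. -/
noncomputable def qNorm {d : ℕ} (Q : Matrix (Fin d) (Fin d) ℝ) (x : Fin d → ℝ) : ℝ :=
  Real.sqrt (x ⬝ᵥ (Q *ᵥ x))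

/-- The operator norm of `A` induced by the `Q`-weighted norm,
`‖A‖_Q = sup_{x ≠ 0} ‖Ax‖_Q / ‖x‖_Q`. -/
noncomputable def qOpNorm {d : ℕ} (Q A : Matrix (Fin d) (Fin d) ℝ) : ℝ :=
  sSup {r : ℝ | ∃ x : Fin d → ℝ, x ≠ 0 ∧ r = qNorm Q (A *ᵥ x) / qNorm Q x}

/- ### Auxiliary lemmas -/

lemma mydot_nonneg {d : ℕ} (v : Fin d → ℝ) : 0 ≤ v ⬝ᵥ v :=
  Finset.sum_nonneg fun _ _ => mul_self_nonneg _

lemma norm_symm {d : ℕ} (v : Fin d → ℝ) :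
    ‖(WithLp.equiv 2 (Fin d → ℝ)).symm v‖ = Real.sqrt (v ⬝ᵥ v) := by
  rw [EuclideanSpace.norm_eq]
  congr 1
  simp [dotProduct, sq, Real.norm_eq_abs, abs_mul_abs_self]

lemma mulVec_bound {d : ℕ} (M : Matrix (Fin d) (Fin d) ℝ) (v : Fin d → ℝ) :
    Real.sqrt ((M *ᵥ v) ⬝ᵥ (M *ᵥ v)) ≤ specNorm M * Real.sqrt (v ⬝ᵥ v) := by
  rw [← norm_symm, ← norm_symm]
  have he : (WithLp.equiv 2 (Fin d → ℝ)).symm (M *ᵥ v) =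
      Matrix.toEuclideanCLM (𝕜 := ℝ) M ((WithLp.equiv 2 (Fin d → ℝ)).symm v) := by
    simp [Matrix.toLin'_apply]
  rw [he]
  exact (Matrix.toEuclideanCLM (𝕜 := ℝ) M).le_opNorm _

lemma specNorm_le_bound {d : ℕ} (M : Matrix (Fin d) (Fin d) ℝ) (C : ℝ) (hC : 0 ≤ C)
    (h : ∀ v : Fin d → ℝ, Real.sqrt ((M *ᵥ v) ⬝ᵥ (M *ᵥ v)) ≤ C * Real.sqrt (v ⬝ᵥ v)) :
    specNorm M ≤ C := by
  apply ContinuousLinearMap.opNorm_le_bound _ hC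
  intro x
  have hx : x = (WithLp.equiv 2 (Fin d → ℝ)).symm (WithLp.equiv 2 (Fin d → ℝ) x) := by simp
  have h1 : Matrix.toEuclideanCLM (𝕜 := ℝ) M x =
      (WithLp.equiv 2 (Fin d → ℝ)).symm (M *ᵥ (WithLp.equiv 2 (Fin d → ℝ) x)) := by
    apply (WithLp.equiv 2 (Fin d → ℝ)).injective
    simp [Matrix.toLin'_apply]
  have h2 : ‖x‖ = Real.sqrt ((WithLp.equiv 2 (Fin d → ℝ) x) ⬝ᵥ (WithLp.equiv 2 (Fin d → ℝ) x)) := by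
    conv_lhs => rw [hx]
    rw [norm_symm]
  rw [h1, norm_symm, h2]
  exact h _

lemma quad_le_specNorm {d : ℕ} (Q : Matrix (Fin d) (Fin d) ℝ) (v : Fin d → ℝ) :
    v ⬝ᵥ Q *ᵥ v ≤ specNorm Q * (v ⬝ᵥ v) := by
  have h1 : v ⬝ᵥ Q *ᵥ v = (inner ℝ ((WithLp.equiv 2 (Fin d → ℝ)).symm v)
      ((Matrix.toEuclideanCLM (𝕜 := ℝ) Q) ((WithLp.equiv 2 (Fin d → ℝ)).symm v)) : ℝ) := by
    rw [Matrix.inner_toEuclideanCLM]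
    simp
  rw [h1]
  simp only [specNorm] at *
  have h2 := real_inner_le_norm ((WithLp.equiv 2 (Fin d → ℝ)).symm v)
      ((Matrix.toEuclideanCLM (𝕜 := ℝ) Q) ((WithLp.equiv 2 (Fin d → ℝ)).symm v))
  have h3 := (Matrix.toEuclideanCLM (𝕜 := ℝ) Q).le_opNorm ((WithLp.equiv 2 (Fin d → ℝ)).symm v)
  have h4 : ‖(WithLp.equiv 2 (Fin d → ℝ)).symm v‖ ^ 2 = v ⬝ᵥ v := by
    rw [norm_symm, Real.sq_sqrt (mydot_nonneg v)]
  have h5 := mul_le_mul_of_nonneg_left h3 (norm_nonneg ((WithLp.equiv 2 (Fin d → ℝ)).symm v))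
  rw [← h4]
  nlinarith [h2, h5]

lemma diag_quad {d : ℕ} (lam : Fin d → ℝ) (y : Fin d → ℝ) :
    y ⬝ᵥ (diagonal lam *ᵥ y) = ∑ i, lam i * y i ^ 2 := by
  simp only [dotProduct, mulVec_diagonal]
  exact Finset.sum_congr rfl fun i _ => by ring

lemma rayleigh {d : ℕ} (hd : 1 ≤ d) {Q : Matrix (Fin d) (Fin d) ℝ} (hQ : Q.PosDef)
    (v : Fin d → ℝ) :
    (⨅ i, hQ.1.eigenvalues i) * (v ⬝ᵥ v) ≤ v ⬝ᵥ Q *ᵥ v ∧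
      v ⬝ᵥ Q *ᵥ v ≤ (⨆ i, hQ.1.eigenvalues i) * (v ⬝ᵥ v) := by
  haveI : Nonempty (Fin d) := ⟨⟨0, hd⟩⟩
  set U : Matrix (Fin d) (Fin d) ℝ := (hQ.1.eigenvectorUnitary : Matrix (Fin d) (Fin d) ℝ) with hU
  set y : Fin d → ℝ := Uᵀ *ᵥ v with hy
  have hsU : star U = Uᵀ := by
    rw [Matrix.star_eq_conjTranspose, Matrix.conjTranspose_eq_transpose_of_trivial]
  have hUU : U * Uᵀ = 1 := by
    rw [← hsU]
    exact (Matrix.mem_unitaryGroup_iff).mp hQ.1.eigenvectorUnitary.2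
  have h1 : v ⬝ᵥ Q *ᵥ v = y ⬝ᵥ (diagonal hQ.1.eigenvalues *ᵥ y) := by
    conv_lhs => rw [hQ.1.spectral_theorem]
    rw [Unitary.conjStarAlgAut_apply, ← hU, hsU]
    have hof : (RCLike.ofReal ∘ hQ.1.eigenvalues : Fin d → ℝ) = hQ.1.eigenvalues := rfl
    rw [hof]
    have hmv : (U * diagonal hQ.1.eigenvalues * Uᵀ) *ᵥ v
        = U *ᵥ (diagonal hQ.1.eigenvalues *ᵥ y) := by
      rw [hy, Matrix.mulVec_mulVec, Matrix.mulVec_mulVec]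
    rw [hmv, Matrix.dotProduct_mulVec, ← Matrix.mulVec_transpose]
  have h2 : v ⬝ᵥ v = y ⬝ᵥ y := by
    symm
    calc y ⬝ᵥ y = ((Uᵀ *ᵥ v) ᵥ* Uᵀ) ⬝ᵥ v := Matrix.dotProduct_mulVec _ _ _
    _ = (U *ᵥ (Uᵀ *ᵥ v)) ⬝ᵥ v := by rw [Matrix.vecMul_transpose]
    _ = ((U * Uᵀ) *ᵥ v) ⬝ᵥ v := by rw [Matrix.mulVec_mulVec]
    _ = v ⬝ᵥ v := by rw [hUU, Matrix.one_mulVec]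
  have hyy : y ⬝ᵥ y = ∑ j, y j ^ 2 := by
    simp only [dotProduct]; exact Finset.sum_congr rfl fun j _ => by ring
  have hbb : BddBelow (Set.range hQ.1.eigenvalues) := (Set.finite_range _).bddBelow
  have hba : BddAbove (Set.range hQ.1.eigenvalues) := (Set.finite_range _).bddAbove
  rw [h1, h2, diag_quad, hyy, Finset.mul_sum, Finset.mul_sum]
  constructor
  · apply Finset.sum_le_sum
    intro i _
    have hle : (⨅ j, hQ.1.eigenvalues j) ≤ hQ.1.eigenvalues i := ciInf_le hbb i
    nlinarith [sq_nonneg (y i)]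
  · apply Finset.sum_le_sum
    intro i _
    have hle : hQ.1.eigenvalues i ≤ ⨆ j, hQ.1.eigenvalues j := le_ciSup hba i
    nlinarith [sq_nonneg (y i)]

lemma qNorm_sq {d : ℕ} {Q : Matrix (Fin d) (Fin d) ℝ} (hQ : Q.PosDef) (v : Fin d → ℝ) :
    qNorm Q v ^ 2 = v ⬝ᵥ Q *ᵥ v := by
  rw [qNorm, Real.sq_sqrt]
  simpa using hQ.posSemidef.dotProduct_mulVec_nonneg v

lemma qNorm_nonneg {d : ℕ} (Q : Matrix (Fin d) (Fin d) ℝ) (v : Fin d → ℝ) :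
    0 ≤ qNorm Q v := Real.sqrt_nonneg _

lemma qNorm_pos {d : ℕ} {Q : Matrix (Fin d) (Fin d) ℝ} (hQ : Q.PosDef) {v : Fin d → ℝ}
    (hv : v ≠ 0) : 0 < qNorm Q v :=
  Real.sqrt_pos.2 (by simpa using hQ.dotProduct_mulVec_pos hv)

lemma qOpNorm_bdd {d : ℕ} (hd : 1 ≤ d) {Q : Matrix (Fin d) (Fin d) ℝ} (hQ : Q.PosDef)
    (A : Matrix (Fin d) (Fin d) ℝ) :
    BddAbove {r : ℝ | ∃ x : Fin d → ℝ, x ≠ 0 ∧ r = qNorm Q (A *ᵥ x) / qNorm Q x} := by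
  haveI : Nonempty (Fin d) := ⟨⟨0, hd⟩⟩
  set m := ⨅ i, hQ.1.eigenvalues i with hm
  have hm0 : 0 < m := by
    obtain ⟨i0, hi0⟩ := exists_eq_ciInf_of_finite (f := hQ.1.eigenvalues)
    rw [hm, ← hi0]
    exact hQ.eigenvalues_pos i0
  refine ⟨Real.sqrt (specNorm Q) * specNorm A / Real.sqrt m, ?_⟩
  rintro r ⟨x, hx, rfl⟩
  have hxx : 0 < x ⬝ᵥ x := by
    rcases (mydot_nonneg x).eq_or_lt with h | h
    · exfalso
      exact hx ((dotProduct_self_eq_zero).mp h.symm)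
    · exact h
  have hnum : qNorm Q (A *ᵥ x) ≤ Real.sqrt (specNorm Q) * specNorm A * Real.sqrt (x ⬝ᵥ x) := by
    have h1 : qNorm Q (A *ᵥ x) ≤ Real.sqrt (specNorm Q) * Real.sqrt ((A *ᵥ x) ⬝ᵥ (A *ᵥ x)) := by
      rw [qNorm, ← Real.sqrt_mul (by
        have := quad_le_specNorm Q x
        nlinarith [hQ.posSemidef.dotProduct_mulVec_nonneg x, hxx, (by simpa using hQ.posSemidef.dotProduct_mulVec_nonneg x : (0:ℝ) ≤ x ⬝ᵥ Q *ᵥ x)])]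
      exact Real.sqrt_le_sqrt (quad_le_specNorm Q (A *ᵥ x))
    calc qNorm Q (A *ᵥ x) ≤ Real.sqrt (specNorm Q) * Real.sqrt ((A *ᵥ x) ⬝ᵥ (A *ᵥ x)) := h1
    _ ≤ Real.sqrt (specNorm Q) * (specNorm A * Real.sqrt (x ⬝ᵥ x)) :=
        mul_le_mul_of_nonneg_left (mulVec_bound A x) (Real.sqrt_nonneg _)
    _ = Real.sqrt (specNorm Q) * specNorm A * Real.sqrt (x ⬝ᵥ x) := by ring
  have hden : Real.sqrt m * Real.sqrt (x ⬝ᵥ x) ≤ qNorm Q x := by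
    rw [qNorm, ← Real.sqrt_mul hm0.le]
    exact Real.sqrt_le_sqrt (rayleigh hd hQ x).1
  have hden0 : 0 < Real.sqrt m * Real.sqrt (x ⬝ᵥ x) :=
    mul_pos (Real.sqrt_pos.2 hm0) (Real.sqrt_pos.2 hxx)
  have hnum0 : 0 ≤ Real.sqrt (specNorm Q) * specNorm A * Real.sqrt (x ⬝ᵥ x) :=
    le_trans (qNorm_nonneg Q _) hnum
  calc qNorm Q (A *ᵥ x) / qNorm Q x
      ≤ (Real.sqrt (specNorm Q) * specNorm A * Real.sqrt (x ⬝ᵥ x)) /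
        (Real.sqrt m * Real.sqrt (x ⬝ᵥ x)) := div_le_div₀ hnum0 hnum hden0 hden
    _ = Real.sqrt (specNorm Q) * specNorm A / Real.sqrt m := by
        rw [mul_div_mul_right _ _ (ne_of_gt (Real.sqrt_pos.2 hxx))]

lemma qNorm_mulVec_le {d : ℕ} (hd : 1 ≤ d) {Q : Matrix (Fin d) (Fin d) ℝ} (hQ : Q.PosDef)
    (A : Matrix (Fin d) (Fin d) ℝ) (v : Fin d → ℝ) :
    qNorm Q (A *ᵥ v) ≤ qOpNorm Q A * qNorm Q v := by
  by_cases hv : v = 0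
  · simp [hv, qNorm, Matrix.mulVec_zero]
  · have hmem : qNorm Q (A *ᵥ v) / qNorm Q v ∈
        {r : ℝ | ∃ x : Fin d → ℝ, x ≠ 0 ∧ r = qNorm Q (A *ᵥ x) / qNorm Q x} := ⟨v, hv, rfl⟩
    have hle : qNorm Q (A *ᵥ v) / qNorm Q v ≤ qOpNorm Q A :=
      le_csSup (qOpNorm_bdd hd hQ A) hmem
    have hv0 : 0 < qNorm Q v := qNorm_pos hQ hv
    calc qNorm Q (A *ᵥ v) = (qNorm Q (A *ᵥ v) / qNorm Q v) * qNorm Q v := by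
          field_simp
      _ ≤ qOpNorm Q A * qNorm Q v := mul_le_mul_of_nonneg_right hle hv0.le

lemma qOpNorm_nonneg {d : ℕ} (hd : 1 ≤ d) {Q : Matrix (Fin d) (Fin d) ℝ} (hQ : Q.PosDef)
    (A : Matrix (Fin d) (Fin d) ℝ) : 0 ≤ qOpNorm Q A := by
  set x₀ : Fin d → ℝ := Pi.single ⟨0, hd⟩ 1 with hx₀def
  have hx₀ : x₀ ≠ 0 := by
    intro h
    have := congrFun h ⟨0, hd⟩
    simp [hx₀def] at this
  have hmem : qNorm Q (A *ᵥ x₀) / qNorm Q x₀ ∈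
      {r : ℝ | ∃ x : Fin d → ℝ, x ≠ 0 ∧ r = qNorm Q (A *ᵥ x) / qNorm Q x} := ⟨x₀, hx₀, rfl⟩
  have h0 : 0 ≤ qNorm Q (A *ᵥ x₀) / qNorm Q x₀ :=
    div_nonneg (qNorm_nonneg _ _) (qNorm_nonneg _ _)
  exact le_trans h0 (le_csSup (qOpNorm_bdd hd hQ A) hmem)

/-- If `Q` is symmetric positive definite with `AᵀQ + QA = I`, then with
`a = (1/2)‖Q‖⁻¹`, for every `α ∈ [0, (1/2)‖A‖_Q⁻²‖Q‖⁻¹]`: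
(i) `‖(I − αA)x‖_Q² ≤ (1 − aα)‖x‖_Q²` for all `x`, and
(ii) `‖I − αA‖ ≤ κ_Q^{1/2} (1 − aα/2)` where `κ_Q = λ_max(Q)/λ_min(Q)`. -/
theorem hurwitz_stability {d : ℕ} (hd : 1 ≤ d)
    (A Q : Matrix (Fin d) (Fin d) ℝ) (hQ : Q.PosDef)
    (hLyap : Aᵀ * Q + Q * A = 1)
    (a : ℝ) (ha : a = (1 / 2) * (specNorm Q)⁻¹)
    (κ : ℝ)
    (hκ : κ = (⨆ i, hQ.1.eigenvalues i) / (⨅ i, hQ.1.eigenvalues i))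
    (α : ℝ) (hα0 : 0 ≤ α) (hα1 : α ≤ (1 / 2) * (qOpNorm Q A)⁻¹ ^ 2 * (specNorm Q)⁻¹) :
    (∀ x : Fin d → ℝ, qNorm Q ((1 - α • A) *ᵥ x) ^ 2 ≤ (1 - a * α) * qNorm Q x ^ 2) ∧
      specNorm (1 - α • A) ≤ Real.sqrt κ * (1 - a * α / 2) := by
  haveI : Nonempty (Fin d) := ⟨⟨0, hd⟩⟩
  set nQ := specNorm Q with hnQ
  set r := qOpNorm Q A with hr
  set lm := ⨅ i, hQ.1.eigenvalues i with hlm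
  set lM := ⨆ i, hQ.1.eigenvalues i with hlM
  set x₀ : Fin d → ℝ := Pi.single ⟨0, hd⟩ 1 with hx₀def
  have hx₀ : x₀ ≠ 0 := by
    intro h
    have := congrFun h ⟨0, hd⟩
    simp [hx₀def] at this
  have hx₀x₀ : 0 < x₀ ⬝ᵥ x₀ := by
    rcases (mydot_nonneg x₀).eq_or_lt with h | h
    · exact absurd ((dotProduct_self_eq_zero).mp h.symm) hx₀
    · exact h
  have hlm0 : 0 < lm := by
    obtain ⟨i0, hi0⟩ := exists_eq_ciInf_of_finite (f := hQ.1.eigenvalues)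
    rw [hlm, ← hi0]
    exact hQ.eigenvalues_pos i0
  have hlmM : lm ≤ lM := by
    have h1 : lm ≤ hQ.1.eigenvalues ⟨0, hd⟩ := ciInf_le ((Set.finite_range _).bddBelow) _
    have h2 : hQ.1.eigenvalues ⟨0, hd⟩ ≤ lM := le_ciSup ((Set.finite_range _).bddAbove) _
    linarith
  have hκ0 : 0 ≤ κ := by
    rw [hκ]
    exact div_nonneg (by linarith) hlm0.le
  have hnQ0 : 0 < nQ := by
    have h1 : (0:ℝ) < x₀ ⬝ᵥ Q *ᵥ x₀ := by simpa using hQ.dotProduct_mulVec_pos hx₀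
    have h2 := quad_le_specNorm Q x₀
    nlinarith
  have hr0 : 0 ≤ r := qOpNorm_nonneg hd hQ A
  -- key quadratic estimate on α
  have key1 : α ^ 2 * r ^ 2 ≤ α * ((1 / 2) * nQ⁻¹) := by
    rcases hα0.eq_or_lt with h0 | h0
    · rw [← h0]; ring_nf; rfl
    · have hrp : 0 < r := by
        rcases hr0.eq_or_lt with hre | hrp
        · exfalso
          rw [← hre] at hα1
          simp at hα1
          linarith
        · exact hrp
      have hc : (1 / 2) * (r⁻¹) ^ 2 * nQ⁻¹ * r ^ 2 = (1 / 2) * nQ⁻¹ := by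
        field_simp
      have h1 : α * r ^ 2 ≤ (1 / 2) * nQ⁻¹ :=
        le_of_le_of_eq (mul_le_mul_of_nonneg_right hα1 (sq_nonneg r)) hc
      have h2 := mul_le_mul_of_nonneg_left h1 hα0
      nlinarith
  -- Part (i)
  have main1 : ∀ x : Fin d → ℝ,
      qNorm Q ((1 - α • A) *ᵥ x) ^ 2 ≤ (1 - a * α) * qNorm Q x ^ 2 := by
    intro x
    set y := A *ᵥ x with hy
    have hz : (1 - α • A) *ᵥ x = x - α • y := by
      rw [Matrix.sub_mulVec, Matrix.one_mulVec, Matrix.smul_mulVec]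
    rw [qNorm_sq hQ, qNorm_sq hQ, hz]
    have hexp : (x - α • y) ⬝ᵥ Q *ᵥ (x - α • y) =
        x ⬝ᵥ Q *ᵥ x - α * (x ⬝ᵥ Q *ᵥ y + y ⬝ᵥ Q *ᵥ x) + α ^ 2 * (y ⬝ᵥ Q *ᵥ y) := by
      simp only [Matrix.mulVec_sub, Matrix.mulVec_smul, dotProduct_sub, sub_dotProduct,
        dotProduct_smul, smul_dotProduct, smul_eq_mul]
      ring
    have hcross : x ⬝ᵥ Q *ᵥ y + y ⬝ᵥ Q *ᵥ x = x ⬝ᵥ x := by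
      have e1 : y ⬝ᵥ Q *ᵥ x = x ⬝ᵥ ((Aᵀ * Q) *ᵥ x) := by
        calc y ⬝ᵥ Q *ᵥ x = (Q *ᵥ x) ⬝ᵥ (A *ᵥ x) := dotProduct_comm _ _
        _ = ((Q *ᵥ x) ᵥ* A) ⬝ᵥ x := Matrix.dotProduct_mulVec _ _ _
        _ = (Aᵀ *ᵥ (Q *ᵥ x)) ⬝ᵥ x := by rw [Matrix.mulVec_transpose]
        _ = ((Aᵀ * Q) *ᵥ x) ⬝ᵥ x := by rw [Matrix.mulVec_mulVec]
        _ = x ⬝ᵥ ((Aᵀ * Q) *ᵥ x) := dotProduct_comm _ _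
      have e2 : x ⬝ᵥ Q *ᵥ y = x ⬝ᵥ ((Q * A) *ᵥ x) := by
        rw [hy, Matrix.mulVec_mulVec]
      rw [e1, e2, ← dotProduct_add, ← Matrix.add_mulVec]
      rw [show Q * A + Aᵀ * Q = Aᵀ * Q + Q * A from add_comm _ _, hLyap, Matrix.one_mulVec]
    have hY : y ⬝ᵥ Q *ᵥ y ≤ r ^ 2 * (x ⬝ᵥ Q *ᵥ x) := by
      have h := qNorm_mulVec_le hd hQ A x
      have h' : qNorm Q y ^ 2 ≤ (r * qNorm Q x) ^ 2 :=
        pow_le_pow_left₀ (qNorm_nonneg _ _) h 2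
      rw [qNorm_sq hQ] at h'
      calc y ⬝ᵥ Q *ᵥ y ≤ (r * qNorm Q x) ^ 2 := h'
      _ = r ^ 2 * qNorm Q x ^ 2 := by ring
      _ = r ^ 2 * (x ⬝ᵥ Q *ᵥ x) := by rw [qNorm_sq hQ]
    have hQx0 : (0:ℝ) ≤ x ⬝ᵥ Q *ᵥ x := by simpa using hQ.posSemidef.dotProduct_mulVec_nonneg x
    have hE1 : x ⬝ᵥ Q *ᵥ x ≤ nQ * (x ⬝ᵥ x) := quad_le_specNorm Q x
    have hinv : nQ⁻¹ * (x ⬝ᵥ Q *ᵥ x) ≤ x ⬝ᵥ x := by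
      rw [inv_mul_le_iff₀ hnQ0]
      exact hE1
    rw [hexp, hcross, ha]
    have f1 : α ^ 2 * (y ⬝ᵥ Q *ᵥ y) ≤ α ^ 2 * (r ^ 2 * (x ⬝ᵥ Q *ᵥ x)) :=
      mul_le_mul_of_nonneg_left hY (sq_nonneg α)
    have f2 : α ^ 2 * r ^ 2 * (x ⬝ᵥ Q *ᵥ x) ≤ α * ((1 / 2) * nQ⁻¹) * (x ⬝ᵥ Q *ᵥ x) :=
      mul_le_mul_of_nonneg_right key1 hQx0
    have f3 : α * (nQ⁻¹ * (x ⬝ᵥ Q *ᵥ x)) ≤ α * (x ⬝ᵥ x) :=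
      mul_le_mul_of_nonneg_left hinv hα0
    nlinarith [f1, f2, f3]
  refine ⟨main1, ?_⟩
  -- Part (ii)
  have hq0pos : 0 < qNorm Q x₀ ^ 2 := pow_pos (qNorm_pos hQ hx₀) 2
  have h1aα : 0 ≤ 1 - a * α := by
    have h := main1 x₀
    nlinarith [sq_nonneg (qNorm Q ((1 - α • A) *ᵥ x₀))]
  have haα0 : 0 ≤ a * α := by
    have ha0 : 0 ≤ a := by rw [ha]; positivity
    exact mul_nonneg ha0 hα0
  have hsq : Real.sqrt (1 - a * α) ≤ 1 - a * α / 2 := by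
    have h := Real.sqrt_le_sqrt (show 1 - a * α ≤ (1 - a * α / 2) ^ 2 by nlinarith)
    rwa [Real.sqrt_sq (by linarith)] at h
  have hC0 : 0 ≤ Real.sqrt κ * (1 - a * α / 2) :=
    mul_nonneg (Real.sqrt_nonneg _) (by linarith)
  apply specNorm_le_bound _ _ hC0
  intro v
  set w := (1 - α • A) *ᵥ v with hw
  have hQv0 : (0:ℝ) ≤ v ⬝ᵥ Q *ᵥ v := by simpa using hQ.posSemidef.dotProduct_mulVec_nonneg v
  have c1 : lm * (w ⬝ᵥ w) ≤ w ⬝ᵥ Q *ᵥ w := (rayleigh hd hQ w).1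
  have c2 : w ⬝ᵥ Q *ᵥ w ≤ (1 - a * α) * (v ⬝ᵥ Q *ᵥ v) := by
    have h := main1 v
    rw [qNorm_sq hQ, qNorm_sq hQ] at h
    exact h
  have c3 : v ⬝ᵥ Q *ᵥ v ≤ lM * (v ⬝ᵥ v) := (rayleigh hd hQ v).2
  have c4 : w ⬝ᵥ w ≤ κ * (1 - a * α) * (v ⬝ᵥ v) := by
    have h5 : lm * (w ⬝ᵥ w) ≤ (1 - a * α) * (lM * (v ⬝ᵥ v)) := by
      calc lm * (w ⬝ᵥ w) ≤ w ⬝ᵥ Q *ᵥ w := c1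
      _ ≤ (1 - a * α) * (v ⬝ᵥ Q *ᵥ v) := c2
      _ ≤ (1 - a * α) * (lM * (v ⬝ᵥ v)) := mul_le_mul_of_nonneg_left c3 h1aα
    have h6 : lm * (κ * (1 - a * α) * (v ⬝ᵥ v)) = (1 - a * α) * (lM * (v ⬝ᵥ v)) := by
      rw [hκ]
      field_simp
    rw [← mul_le_mul_iff_right₀ hlm0, h6]
    exact h5
  have c5 : Real.sqrt (w ⬝ᵥ w) ≤ Real.sqrt κ * Real.sqrt (1 - a * α) * Real.sqrt (v ⬝ᵥ v) := by
    calc Real.sqrt (w ⬝ᵥ w) ≤ Real.sqrt (κ * (1 - a * α) * (v ⬝ᵥ v)) := Real.sqrt_le_sqrt c4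
    _ = Real.sqrt κ * Real.sqrt (1 - a * α) * Real.sqrt (v ⬝ᵥ v) := by
        rw [Real.sqrt_mul (by positivity), Real.sqrt_mul hκ0]
  calc Real.sqrt (w ⬝ᵥ w) ≤ Real.sqrt κ * Real.sqrt (1 - a * α) * Real.sqrt (v ⬝ᵥ v) := c5
  _ ≤ Real.sqrt κ * (1 - a * α / 2) * Real.sqrt (v ⬝ᵥ v) := by
      have := mul_le_mul_of_nonneg_left hsq (Real.sqrt_nonneg κ)
      exact mul_le_mul_of_nonneg_right this (Real.sqrt_nonneg _)
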